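/- Let Z be a countable well partially ordered set (a partial order that is a well-quasi-ordering) and let n ∈ ℕ. For every z ∈ Z, rk(z) < ω·n if and only if z ∈ A_n(Z). -/

import Mathlib

/-- A quasi-ordered set is a well-quasi-ordering if every infinite sequence
contains an increasing pair. -/
def IsWqo (X : Type*) [Preorder X] : Prop :=
  ∀ f : ℕ → X, ∃ i j : ℕ, i < j ∧ f i ≤ f j

/-- The ordinal rank of an element of a preorder: `rk z = sup {rk y + 1 : y < z}`
when the strict order is well-founded (and `0` otherwise, by convention). -/
noncomputable def rk {Z : Type*} [Preorder Z] (z : Z) : Ordinal :=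
  @dite _ (WellFounded ((· < ·) : Z → Z → Prop)) (Classical.dec _)
    (fun h => (h.apply z).rank) (fun _ => 0)

/-- `AccelSet Z 0 = ∅` and `AccelSet Z (n+1)` is the set of `z` such that every
acceleration candidate (infinite strictly increasing sequence) below `z` goes
through `AccelSet Z n`. -/
def AccelSet (Z : Type*) [PartialOrder Z] : ℕ → Set Z
  | 0 => ∅
  | n + 1 => {z : Z | ∀ f : ℕ → Z,
      (∀ i, f i < f (i + 1)) → (∀ i, f i ≤ z) → ∃ i, f i ∈ AccelSet Z n}

section Aux

variable {Z : Type*} [PartialOrder Z]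

lemma IsWqo.pwo (hwqo : IsWqo Z) :
    (Set.univ : Set Z).PartiallyWellOrderedOn (· ≤ ·) :=
  fun f => hwqo (fun i => (f i).1)

lemma IsWqo.wf (hwqo : IsWqo Z) : WellFounded ((· < ·) : Z → Z → Prop) := by
  have h := hwqo.pwo.wellFoundedOn
  rw [Set.wellFoundedOn_univ] at h
  simpa only [← lt_iff_le_not_ge] using h

lemma rk_eq_rank (hwf : WellFounded ((· < ·) : Z → Z → Prop)) (z : Z) :
    rk z = (hwf.apply z).rank := by
  rw [rk, dif_pos hwf]

lemma rk_lt_rk (hwqo : IsWqo Z) {y z : Z} (h : y < z) : rk y < rk z := by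
  have hwf := hwqo.wf
  rw [rk_eq_rank hwf, rk_eq_rank hwf]
  exact Acc.rank_lt_of_rel (hwf.apply z) h

lemma exists_lt_of_lt_rk (hwqo : IsWqo Z) {z : Z} {c : Ordinal}
    (h : c < rk z) : ∃ y, y < z ∧ c ≤ rk y := by
  have hwf := hwqo.wf
  rw [rk_eq_rank hwf, Acc.rank_eq, Ordinal.lt_iSup_iff] at h
  obtain ⟨⟨y, hy⟩, hc⟩ := h
  rw [Order.lt_succ_iff] at hc
  exact ⟨y, hy, by rw [rk_eq_rank hwf]; exact hc⟩

lemma accelSet_downward {n : ℕ} {y z : Z} (hle : y ≤ z)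
    (hz : z ∈ AccelSet Z n) : y ∈ AccelSet Z n := by
  cases n with
  | zero => exact hz
  | succ n => exact fun f hf hfy => hz f hf (fun i => (hfy i).trans hle)

end Aux

/-- In a countable wpo `Z`, `rk z < ω·n` if and only if `z ∈ A_n(Z)`. -/
theorem rank_lt_omega_mul_iff_accelSet {Z : Type*} [PartialOrder Z] [Countable Z]
    (hwqo : IsWqo Z) (n : ℕ) (z : Z) :
    rk z < Ordinal.omega0 * n ↔ z ∈ AccelSet Z n := by
  induction n generalizing z with
  | zero => simp [AccelSet]
  | succ n IH =>
    have homega : (Ordinal.omega0 * (n + 1 : ℕ) : Ordinal)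
        = Ordinal.omega0 * n + Ordinal.omega0 := by
      rw [Nat.cast_succ, mul_add, mul_one]
    constructor
    · -- forward direction
      intro hlt f hinc hle
      by_contra hcon
      push_neg at hcon
      have hrk : ∀ i, Ordinal.omega0 * n ≤ rk (f i) := fun i =>
        le_of_not_gt (fun h => hcon i ((IH (f i)).mp h))
      have hstep : ∀ i : ℕ, Ordinal.omega0 * n + i ≤ rk (f i) := by
        intro i
        induction i with
        | zero => simpa using hrk 0
        | succ i ih =>
          have h1 : rk (f i) < rk (f (i + 1)) := rk_lt_rk hwqo (hinc i)
          have : Ordinal.omega0 * n + i < rk (f (i + 1)) := lt_of_le_of_lt ih h1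
          rw [Nat.cast_succ, ← add_assoc]
          exact Order.add_one_le_of_lt this
      have hflt : ∀ i, f i < z := fun i => lt_of_lt_of_le (hinc i) (hle (i + 1))
      have hbase : Ordinal.omega0 * n ≤ rk z :=
        le_of_lt (lt_of_le_of_lt (hrk 0) (rk_lt_rk hwqo (hflt 0)))
      rw [homega] at hlt
      have hd : rk z - Ordinal.omega0 * n < Ordinal.omega0 :=
        Ordinal.sub_lt_of_lt_add hlt Ordinal.omega0_pos
      obtain ⟨m, hm⟩ := Ordinal.lt_omega0.mp hd
      have hz' : rk z = Ordinal.omega0 * n + m := by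
        rw [← hm, Ordinal.add_sub_cancel_of_le hbase]
      have : Ordinal.omega0 * n + m < rk z :=
        lt_of_le_of_lt (hstep m) (rk_lt_rk hwqo (hflt m))
      rw [hz'] at this
      exact absurd this (lt_irrefl _)
    · -- backward direction, by well-founded induction on z
      have key : ∀ z : Z, z ∈ AccelSet Z (n + 1) →
          rk z < Ordinal.omega0 * (n + 1 : ℕ) := by
        intro z
        induction z using hwqo.wf.induction with
        | _ z IH2 =>
        intro hz
        by_contra h
        push_neg at h
        rw [homega] at h
        have hsel : ∀ k : ℕ, ∃ y, y < z ∧ Ordinal.omega0 * n + k ≤ rk y := by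
          intro k
          refine exists_lt_of_lt_rk hwqo (lt_of_lt_of_le ?_ h)
          exact (add_lt_add_iff_left _).mpr (Ordinal.nat_lt_omega0 k)
        choose g hg1 hg2 using hsel
        obtain ⟨e, he⟩ := hwqo.pwo.exists_monotone_subseq (f := g) (fun _ => trivial)
        by_cases hcase : ∀ m, ∃ p, m < p ∧ g (e m) < g (e p)
        · choose nxt h1 h2 using hcase
          set hfun : ℕ → ℕ := fun i => Nat.rec 0 (fun _ prev => nxt prev) i with hfun_def
          have hstrict : ∀ i, g (e (hfun i)) < g (e (hfun (i + 1))) := fun i => h2 (hfun i)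
          have hbelow : ∀ i, g (e (hfun i)) ≤ z := fun i => (hg1 _).le
          obtain ⟨i, hi⟩ := hz (fun i => g (e (hfun i))) hstrict hbelow
          have : rk (g (e (hfun i))) < Ordinal.omega0 * n := (IH (g (e (hfun i)))).mpr hi
          have hge : Ordinal.omega0 * n ≤ rk (g (e (hfun i))) :=
            le_trans le_self_add (hg2 (e (hfun i)))
          exact absurd this (not_lt_of_ge hge)
        · push_neg at hcase
          obtain ⟨m, hm⟩ := hcase
          set y := g (e m) with hy_def
          have hyeq : ∀ p, m < p → g (e p) = y := by
            intro p hp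
            have h1 : y ≤ g (e p) := he m p hp.le
            rcases h1.lt_or_eq with h2 | h2
            · exact absurd h2 (hm p hp)
            · exact h2.symm
          have hyk : ∀ p : ℕ, m < p → Ordinal.omega0 * n + p ≤ rk y := by
            intro p hp
            have h1 : (p : Ordinal) ≤ e p := by
              exact_mod_cast e.strictMono.le_apply
            calc Ordinal.omega0 * n + p ≤ Ordinal.omega0 * n + e p :=
                  add_le_add_right h1 _
              _ ≤ rk (g (e p)) := hg2 (e p)
              _ = rk y := by rw [hyeq p hp]
          have hymem : y ∈ AccelSet Z (n + 1) := accelSet_downward (hg1 (e m)).le hz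
          have hylt : rk y < Ordinal.omega0 * n + Ordinal.omega0 := by
            rw [← homega]; exact IH2 y (hg1 (e m)) hymem
          have hbase : Ordinal.omega0 * n ≤ rk y :=
            le_trans le_self_add (hyk (m + 1) (Nat.lt_succ_self m))
          have hd : rk y - Ordinal.omega0 * n < Ordinal.omega0 :=
            Ordinal.sub_lt_of_lt_add hylt Ordinal.omega0_pos
          obtain ⟨m', hm'⟩ := Ordinal.lt_omega0.mp hd
          have hy' : rk y = Ordinal.omega0 * n + m' := by
            rw [← hm', Ordinal.add_sub_cancel_of_le hbase]
          have h1 : Ordinal.omega0 * n + (max (m + 1) (m' + 1) : ℕ) ≤ rk y :=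
            hyk _ (lt_of_lt_of_le (Nat.lt_succ_self m) (le_max_left _ _))
          have h2 : (m' : Ordinal) < (max (m + 1) (m' + 1) : ℕ) := by
            exact_mod_cast lt_of_lt_of_le (Nat.lt_succ_self m') (le_max_right _ _)
          rw [hy'] at h1
          exact absurd (lt_of_lt_of_le ((add_lt_add_iff_left _).mpr h2) h1) (lt_irrefl _)
      exact key z
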